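/- There does not exist an asymptotically flat graph G of dimension n = 2 with E(G) > 0. -/

import Mathlib

open Filter Topology

noncomputable section

namespace PMT

/-- The `i`-th standard unit vector in `ℤⁿ`. -/
def e (n : ℕ) (i : Fin n) : Fin n → ℤ := fun j => if j = i then 1 else 0

/-- The grid graph on `ℤⁿ`: `x ∼ y` iff `‖x − y‖₁ = 1`. -/
def grid (n : ℕ) : SimpleGraph (Fin n → ℤ) where
  Adj x y := (∑ i, |x i - y i|) = 1
  symm := by
    constructor
    intro x y (h : (∑ i, |x i - y i|) = 1)
    show (∑ i, |y i - x i|) = 1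
    have h' : ∀ i ∈ Finset.univ, |y i - x i| = |x i - y i| :=
      fun i _ => abs_sub_comm _ _
    rw [Finset.sum_congr rfl h']
    exact h
  loopless := by constructor; intro x (h : (∑ i, |x i - x i|) = 1); simp at h

/-- The graph Laplacian `Δf(x) = Σ_{y∼x} w(x,y)(f(y)−f(x))` of an integer-valued function. -/
def lap {V : Type*} (G : SimpleGraph V) (w : V → V → ℝ) (f : V → ℤ) (x : V) : ℝ :=
  ∑ᶠ y ∈ {y | G.Adj x y}, w x y * ((f y : ℝ) - (f x : ℝ))

/-- `f : V → ℤ` is 1-Lipschitz with respect to the combinatorial graph distance. -/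
def Lip1 {V : Type*} (G : SimpleGraph V) (f : V → ℤ) : Prop :=
  ∀ x y, |f x - f y| ≤ (G.dist x y : ℤ)

/-- Ollivier curvature of the pair `(x, y)`:
`κ(x,y) = inf {Δf(x) − Δf(y) | f : V → ℤ, f 1-Lipschitz, f(y) = f(x) + 1}`. -/
def kappa {V : Type*} (G : SimpleGraph V) (w : V → V → ℝ) (x y : V) : ℝ :=
  sInf {r | ∃ f : V → ℤ, Lip1 G f ∧ f y = f x + 1 ∧ r = lap G w f x - lap G w f y}

/-- Scalar curvature `R(x) = Σ_{y∼x} κ(x,y)`. -/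
def scal {V : Type*} (G : SimpleGraph V) (w : V → V → ℝ) (x : V) : ℝ :=
  ∑ᶠ y ∈ {y | G.Adj x y}, kappa G w x y

/-- A weighted grid graph `(ℤⁿ, w)`: symmetric weights, positive on edges. -/
structure GridWeight (n : ℕ) where
  w : (Fin n → ℤ) → (Fin n → ℤ) → ℝ
  symm : ∀ x y, w x y = w y x
  pos : ∀ x y, (grid n).Adj x y → 0 < w x y

/-- The quantity `Abs(x)` measuring the distortion from the standard grid graph. -/
def Absf (n : ℕ) (w : (Fin n → ℤ) → (Fin n → ℤ) → ℝ) (x : Fin n → ℤ) : ℝ :=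
  ∑ i, ∑ j, if i ≠ j then
      (|w x (x + e n i) - w (x + e n j) (x + e n j + e n i)| +
       |w x (x + e n i) - w (x - e n j) (x - e n j + e n i)| +
       |w x (x - e n i) - w (x + e n j) (x + e n j - e n i)| +
       |w x (x - e n i) - w (x - e n j) (x - e n j - e n i)|)
    else 0

/-- The `ℓ^∞` norm `‖x‖_∞` of `x ∈ ℤⁿ`, as a natural number. -/
def nInf {n : ℕ} (x : Fin n → ℤ) : ℕ := Finset.univ.sup fun i => (x i).natAbs

/-- The cube `Q_r = {y ∈ ℤⁿ : ‖y‖∞ ≤ r}` as a finset. -/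
def Qr (n r : ℕ) : Finset (Fin n → ℤ) := Finset.Icc (fun _ => -(r : ℤ)) (fun _ => (r : ℤ))

/-- `Σ_{e ∈ E_r} w(e)`: the sum of weights of edges with exactly one endpoint in `Q_r`
(each such edge is counted once, via its endpoint inside `Q_r`). -/
def ErSum (n : ℕ) (w : (Fin n → ℤ) → (Fin n → ℤ) → ℝ) (r : ℕ) : ℝ :=
  ∑ x ∈ Qr n r, ∑ i,
    ((if x + e n i ∉ Qr n r then w x (x + e n i) else 0) +
     (if x - e n i ∉ Qr n r then w x (x - e n i) else 0))

/-- `Σ_{τ ∈ Ẽ_r} w(τ)`: the sum of weights of edges joining the sphere `S_{r+1}` to the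
sphere `S_{r+2}` (each such edge is counted once, via its endpoint in `S_{r+1}`). -/
def TErSum (n : ℕ) (w : (Fin n → ℤ) → (Fin n → ℤ) → ℝ) (r : ℕ) : ℝ :=
  ∑ x ∈ Qr n (r + 1), if nInf x = r + 1 then
      (∑ i, ((if nInf (x + e n i) = r + 2 then w x (x + e n i) else 0) +
             (if nInf (x - e n i) = r + 2 then w x (x - e n i) else 0)))
    else 0

/-- The weighted grid graph `(ℤⁿ, w)` is asymptotically flat: there is `p > n` with
`w = 1 + o(1)`, `Abs(x) = O(‖x‖∞^{−p})` and `|R(x)| = O(‖x‖∞^{−p})` as `‖x‖∞ → ∞`. -/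
def AsympFlatGrid (n : ℕ) (W : GridWeight n) : Prop :=
  ∃ p : ℝ, (n : ℝ) < p ∧
    (∀ ε : ℝ, 0 < ε → ∃ M : ℕ, ∀ x y, (grid n).Adj x y → M ≤ nInf x → |W.w x y - 1| ≤ ε) ∧
    (∃ C : ℝ, ∃ M : ℕ, 0 < M ∧ ∀ x, M ≤ nInf x → Absf n W.w x ≤ C * (nInf x : ℝ) ^ (-p)) ∧
    (∃ C : ℝ, ∃ M : ℕ, 0 < M ∧ ∀ x, M ≤ nInf x → |scal (grid n) W.w x| ≤ C * (nInf x : ℝ) ^ (-p))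


/-- A weighted graph: simple, undirected, connected, locally finite,
with symmetric positive edge weights. -/
structure WGraph (V : Type) where
  G : SimpleGraph V
  w : V → V → ℝ
  symm : ∀ x y, w x y = w y x
  pos : ∀ x y, G.Adj x y → 0 < w x y
  locFin : ∀ x : V, {y | G.Adj x y}.Finite
  conn : G.Connected

/-- The weighted graph `W` is asymptotically flat with asymptotic model the
asymptotically flat weighted grid graph `Wg` on `ℤⁿ`: outside a finite set `K`, `W` is
weighted isomorphic (via `Φ`) to the complement of the cube `Q_r` in `(ℤⁿ, Wg.w)`, and
there are no edges between `K` and `Φ⁻¹(ℤⁿ ∖ Q_{r+1})`. -/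
def AsympFlatPair {V : Type} (n : ℕ) (W : WGraph V) (Wg : GridWeight n) : Prop :=
  AsympFlatGrid n Wg ∧
  ∃ (K : Set V) (r : ℕ) (Φ : V → (Fin n → ℤ)),
    K.Finite ∧ 0 < r ∧
    Set.BijOn Φ Kᶜ {x | r < nInf x} ∧
    (∀ u v, u ∉ K → v ∉ K → (W.G.Adj u v ↔ (grid n).Adj (Φ u) (Φ v))) ∧
    (∀ u v, u ∉ K → v ∉ K → W.G.Adj u v → W.w u v = Wg.w (Φ u) (Φ v)) ∧
    (∀ u v, u ∈ K → v ∉ K → r + 1 < nInf (Φ v) → ¬ W.G.Adj u v)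


lemma mem_Qr_iff {n r : ℕ} {x : Fin n → ℤ} : x ∈ Qr n r ↔ ∀ i, (x i).natAbs ≤ r := by
  simp only [Qr, Finset.mem_Icc, Pi.le_def]
  constructor
  · rintro ⟨h1, h2⟩ i; have := h1 i; have := h2 i; omega
  · intro h
    refine ⟨fun i => ?_, fun i => ?_⟩ <;> (have := h i; omega)

lemma natAbs_le_nInf {n : ℕ} (x : Fin n → ℤ) (i : Fin n) : (x i).natAbs ≤ nInf x :=
  Finset.le_sup (f := fun i => (x i).natAbs) (Finset.mem_univ i)

lemma nInf_le_iff {n : ℕ} {x : Fin n → ℤ} {c : ℕ} : nInf x ≤ c ↔ ∀ i, (x i).natAbs ≤ c := by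
  simp [nInf, Finset.sup_le_iff]

lemma nInf_eq_of {n : ℕ} {x : Fin n → ℤ} {c : ℕ} (i : Fin n)
    (h1 : ∀ j, (x j).natAbs ≤ c) (h2 : (x i).natAbs = c) : nInf x = c :=
  le_antisymm (nInf_le_iff.mpr h1) (h2 ▸ natAbs_le_nInf x i)

def ι (b : Bool) : ℤ := if b then 1 else -1

def Ev (i : Fin 2) (b : Bool) : Fin 2 → ℤ := fun k => if k = i then ι b else 0

lemma add_Ev_true (x : Fin 2 → ℤ) (i : Fin 2) : x + Ev i true = x + e 2 i := by
  funext k; simp [Ev, e, ι]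

lemma add_Ev_false (x : Fin 2 → ℤ) (i : Fin 2) : x + Ev i false = x - e 2 i := by
  funext k; simp [Ev, e, ι, sub_eq_add_neg]; split <;> simp

lemma adj_add_Ev (x : Fin 2 → ℤ) (i : Fin 2) (b : Bool) : (grid 2).Adj x (x + Ev i b) := by
  show (∑ k, |x k - (x + Ev i b) k|) = 1
  have h : ∀ k ∈ Finset.univ, |x k - (x + Ev i b) k| = if k = i then 1 else 0 := by
    intro k _
    simp only [Pi.add_apply, Ev, ι]
    cases b <;> split <;> simp
  rw [Finset.sum_congr rfl h]
  simp

lemma four_le_Absf (w : (Fin 2 → ℤ) → (Fin 2 → ℤ) → ℝ) (x : Fin 2 → ℤ) {i j : Fin 2}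
    (hij : i ≠ j) :
    |w x (x + e 2 i) - w (x + e 2 j) (x + e 2 j + e 2 i)| ≤ Absf 2 w x ∧
    |w x (x + e 2 i) - w (x - e 2 j) (x - e 2 j + e 2 i)| ≤ Absf 2 w x ∧
    |w x (x - e 2 i) - w (x + e 2 j) (x + e 2 j - e 2 i)| ≤ Absf 2 w x ∧
    |w x (x - e 2 i) - w (x - e 2 j) (x - e 2 j - e 2 i)| ≤ Absf 2 w x := by
  set f : Fin 2 → Fin 2 → ℝ := fun i' j' => if i' ≠ j' then
      (|w x (x + e 2 i') - w (x + e 2 j') (x + e 2 j' + e 2 i')| +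
       |w x (x + e 2 i') - w (x - e 2 j') (x - e 2 j' + e 2 i')| +
       |w x (x - e 2 i') - w (x + e 2 j') (x + e 2 j' - e 2 i')| +
       |w x (x - e 2 i') - w (x - e 2 j') (x - e 2 j' - e 2 i')|)
    else 0 with hf
  have hnn : ∀ i' j', 0 ≤ f i' j' := by
    intro i' j'; rw [hf]; dsimp only; split
    · positivity
    · exact le_refl 0
  have hABS : Absf 2 w x = ∑ i', ∑ j', f i' j' := rfl
  have h1 : f i j ≤ ∑ j', f i j' :=
    Finset.single_le_sum (fun j' _ => hnn i j') (Finset.mem_univ j)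
  have h2 : (∑ j', f i j') ≤ ∑ i', ∑ j', f i' j' :=
    Finset.single_le_sum (fun i' _ => Finset.sum_nonneg fun j' _ => hnn i' j')
      (Finset.mem_univ i)
  have h3 : f i j ≤ Absf 2 w x := by rw [hABS]; exact le_trans h1 h2
  rw [hf] at h3; simp only [if_pos hij] at h3
  have a1 := abs_nonneg (w x (x + e 2 i) - w (x + e 2 j) (x + e 2 j + e 2 i))
  have a2 := abs_nonneg (w x (x + e 2 i) - w (x - e 2 j) (x - e 2 j + e 2 i))
  have a3 := abs_nonneg (w x (x - e 2 i) - w (x + e 2 j) (x + e 2 j - e 2 i))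
  have a4 := abs_nonneg (w x (x - e 2 i) - w (x - e 2 j) (x - e 2 j - e 2 i))
  exact ⟨by linarith, by linarith, by linarith, by linarith⟩

lemma step_le_Absf (w : (Fin 2 → ℤ) → (Fin 2 → ℤ) → ℝ) {i j : Fin 2} (hij : i ≠ j)
    (bi bj : Bool) (z : Fin 2 → ℤ) :
    |w z (z + Ev i bi) - w (z + Ev j bj) (z + Ev j bj + Ev i bi)| ≤ Absf 2 w z := by
  obtain ⟨h1, h2, h3, h4⟩ := four_le_Absf w z hij
  cases bi <;> cases bj <;>
    simp only [add_Ev_true, add_Ev_false] <;> assumption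



lemma tele_abs (a : ℕ → ℝ) (g : ℕ → ℝ) (h : ∀ s, |a s - a (s + 1)| ≤ g s) :
    ∀ T, |a 0 - a T| ≤ ∑ s ∈ Finset.range T, g s := by
  intro T
  induction T with
  | zero => simp
  | succ T ih =>
    rw [Finset.sum_range_succ]
    calc |a 0 - a (T + 1)| ≤ |a 0 - a T| + |a T - a (T + 1)| := abs_sub_le _ _ _
      _ ≤ _ := add_le_add ih (h T)

lemma tail_sq (m : ℕ) (hm : 1 ≤ m) (T : ℕ) :
    (∑ s ∈ Finset.range T, (if s ≤ m then 0 else ((s : ℝ) * (s : ℝ))⁻¹)) ≤ (m : ℝ)⁻¹ := by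
  have key : ∀ T : ℕ, (∑ s ∈ Finset.range T, (if s ≤ m then 0 else ((s : ℝ) * (s : ℝ))⁻¹))
      ≤ (m : ℝ)⁻¹ - ((max m (T - 1) : ℕ) : ℝ)⁻¹ := by
    intro T
    induction T with
    | zero => simp
    | succ T ih =>
      rw [Finset.sum_range_succ]
      by_cases hT : T ≤ m
      · have h1 : max m (T + 1 - 1) = m := by omega
        have h2 : max m (T - 1) = m := by omega
        rw [if_pos hT, h1]
        rw [h2] at ih
        linarith
      · push_neg at hT
        have h1 : max m (T + 1 - 1) = T := by omega
        have h2 : max m (T - 1) = T - 1 := by omega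
        rw [if_neg (by omega), h1]
        rw [h2] at ih
        have hT1 : 1 ≤ T - 1 := by omega
        have hc : ((T - 1 : ℕ) : ℝ) = (T : ℝ) - 1 := by
          have : (1:ℕ) ≤ T := by omega
          push_cast [Nat.cast_sub this]; ring
        have hTpos : (0 : ℝ) < (T : ℝ) - 1 := by
          rw [← hc]; exact_mod_cast hT1
        have hTpos' : (0 : ℝ) < (T : ℝ) := by exact_mod_cast (by omega : 0 < T)
        have hstep : ((T : ℝ) * (T : ℝ))⁻¹ ≤ ((T : ℝ) - 1)⁻¹ - ((T : ℝ))⁻¹ := by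
          have hE : ((T : ℝ) - 1)⁻¹ - ((T : ℝ))⁻¹ = ((T:ℝ) * ((T:ℝ) - 1))⁻¹ := by
            rw [mul_inv]
            field_simp
            ring
          rw [hE]
          apply inv_anti₀ (by nlinarith) (by nlinarith)
        calc _ ≤ ((m : ℝ)⁻¹ - ((T - 1 : ℕ) : ℝ)⁻¹) + ((T : ℝ) * (T : ℝ))⁻¹ :=
              add_le_add ih le_rfl
          _ ≤ (m : ℝ)⁻¹ - ((T : ℕ) : ℝ)⁻¹ := by rw [hc]; linarith
  calc _ ≤ (m : ℝ)⁻¹ - ((max m (T - 1) : ℕ) : ℝ)⁻¹ := key T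
    _ ≤ (m : ℝ)⁻¹ := by
        have : (0:ℝ) ≤ ((max m (T - 1) : ℕ) : ℝ)⁻¹ := by positivity
        linarith

lemma rpow_anti {a b : ℝ} (ha : 0 < a) (hab : a ≤ b) {q : ℝ} (hq : q ≤ 0) :
    b ^ q ≤ a ^ q := Real.rpow_le_rpow_of_nonpos ha hab hq

lemma sum_bound {p : ℝ} (hp : 2 < p) (m : ℕ) (hm : 1 ≤ m) (T : ℕ) :
    (∑ s ∈ Finset.range T, ((max m s : ℕ) : ℝ) ^ (-p)) ≤ 3 * (m : ℝ) ^ (1 - p) := by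
  have hm0 : (0 : ℝ) < (m : ℝ) := by exact_mod_cast hm
  have hstep : ∀ s ∈ Finset.range T, ((max m s : ℕ) : ℝ) ^ (-p) ≤
      (if s ≤ m then (m : ℝ) ^ (-p) else ((s : ℝ) * (s : ℝ))⁻¹ * (m : ℝ) ^ (2 - p)) := by
    intro s _
    by_cases hs : s ≤ m
    · rw [if_pos hs]
      have : max m s = m := by omega
      rw [this]
    · rw [if_neg hs]
      push_neg at hs
      have hmax : max m s = s := by omega
      rw [hmax]
      have hs0 : (0 : ℝ) < (s : ℝ) := by exact_mod_cast (by omega : 0 < s)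
      have h1 : ((s : ℝ)) ^ (-p) = ((s:ℝ))^(-2 : ℝ) * ((s:ℝ)) ^ (2 - p) := by
        rw [← Real.rpow_add hs0]; congr 1; ring
      rw [h1]
      have h2 : ((s:ℝ))^(-2 : ℝ) = ((s : ℝ) * (s : ℝ))⁻¹ := by
        rw [Real.rpow_neg hs0.le, show (2:ℝ) = ((2:ℕ):ℝ) by norm_num, Real.rpow_natCast]
        ring_nf
      rw [h2]
      have h3 : ((s:ℝ)) ^ (2 - p) ≤ (m : ℝ) ^ (2 - p) := by
        apply rpow_anti hm0 (by exact_mod_cast (by omega : m ≤ s)) (by linarith)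
      have : (0:ℝ) ≤ ((s : ℝ) * (s : ℝ))⁻¹ := by positivity
      exact mul_le_mul_of_nonneg_left h3 this
  calc (∑ s ∈ Finset.range T, ((max m s : ℕ) : ℝ) ^ (-p))
      ≤ ∑ s ∈ Finset.range T,
        (if s ≤ m then (m : ℝ) ^ (-p) else ((s : ℝ) * (s : ℝ))⁻¹ * (m : ℝ) ^ (2 - p)) :=
        Finset.sum_le_sum hstep
    _ = (∑ s ∈ Finset.range T, (if s ≤ m then (m : ℝ) ^ (-p) else 0)) +
        (∑ s ∈ Finset.range T, (if s ≤ m then 0 else ((s : ℝ) * (s : ℝ))⁻¹)) * (m : ℝ) ^ (2 - p) := by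
        rw [Finset.sum_mul, ← Finset.sum_add_distrib]
        refine Finset.sum_congr rfl fun s _ => ?_
        by_cases hs : s ≤ m <;> simp [hs]
    _ ≤ (m + 1 : ℝ) * (m : ℝ) ^ (-p) + (m : ℝ)⁻¹ * (m : ℝ) ^ (2 - p) := by
        have hb1 : (∑ s ∈ Finset.range T, (if s ≤ m then (m : ℝ) ^ (-p) else 0))
            ≤ (m + 1 : ℝ) * (m : ℝ) ^ (-p) := by
          rw [← Finset.sum_filter, Finset.sum_const]
          have hcard : ((Finset.range T).filter (fun s => s ≤ m)).card ≤ m + 1 := by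
            have hsub : (Finset.range T).filter (fun s => s ≤ m) ⊆ Finset.range (m + 1) := by
              intro s hs
              simp only [Finset.mem_filter, Finset.mem_range] at *
              omega
            simpa using Finset.card_le_card hsub
          have hnn : (0:ℝ) ≤ (m : ℝ) ^ (-p) := by positivity
          calc (((Finset.range T).filter (fun s => s ≤ m)).card : ℕ) • ((m : ℝ) ^ (-p))
              = (((Finset.range T).filter (fun s => s ≤ m)).card : ℝ) * (m : ℝ) ^ (-p) := by
                rw [nsmul_eq_mul]
            _ ≤ (m + 1 : ℝ) * (m : ℝ) ^ (-p) := by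
                apply mul_le_mul_of_nonneg_right _ hnn
                exact_mod_cast hcard
        have hb2 := tail_sq m hm T
        have hnn2 : (0:ℝ) ≤ (m : ℝ) ^ (2 - p) := by positivity
        have := mul_le_mul_of_nonneg_right hb2 hnn2
        linarith
    _ ≤ 3 * (m : ℝ) ^ (1 - p) := by
        have e1 : (m : ℝ) * (m : ℝ) ^ (-p) = (m : ℝ) ^ (1 - p) := by
          rw [show (1:ℝ) - p = 1 + (-p) by ring, Real.rpow_add hm0, Real.rpow_one]
        have e2 : (m : ℝ)⁻¹ * (m : ℝ) ^ (2 - p) = (m : ℝ) ^ (1 - p) := by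
          rw [show (1:ℝ) - p = (-1) + (2 - p) by ring, Real.rpow_add hm0, Real.rpow_neg_one]
        have e3 : (1:ℝ) * (m : ℝ) ^ (-p) ≤ (m : ℝ) ^ (1 - p) := by
          rw [one_mul]
          apply Real.rpow_le_rpow_of_exponent_le (by exact_mod_cast hm)
          linarith
        have : (m + 1 : ℝ) * (m : ℝ) ^ (-p) = (m:ℝ) * (m : ℝ) ^ (-p) + 1 * (m : ℝ) ^ (-p) := by ring
        rw [this]
        linarith [e1, e2, e3]


section Aux
variable {p : ℝ}

lemma weight_close (w : (Fin 2 → ℤ) → (Fin 2 → ℤ) → ℝ) (hp : 2 < p)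
    (hw1 : ∀ ε : ℝ, 0 < ε → ∃ M : ℕ, ∀ x y, (grid 2).Adj x y → M ≤ nInf x → |w x y - 1| ≤ ε)
    (C : ℝ) (M : ℕ) (hA : ∀ x, M ≤ nInf x → Absf 2 w x ≤ C * (nInf x : ℝ) ^ (-p)) :
    ∀ (x : Fin 2 → ℤ) (i : Fin 2) (b : Bool), max M 1 ≤ nInf x →
      |w x (x + Ev i b) - 1| ≤ (3 * max C 0) * (nInf x : ℝ) ^ (1 - p) := by
  intro x i b hx
  set m := nInf x with hm
  have hm1 : 1 ≤ m := le_trans (le_max_right _ _) hx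
  have hMm : M ≤ m := le_trans (le_max_left _ _) hx
  have hm0 : (0 : ℝ) < (m : ℝ) := by exact_mod_cast hm1
  set j : Fin 2 := if i = 0 then 1 else 0 with hj
  have hij : i ≠ j := by fin_cases i <;> simp [hj]
  have hcov : ∀ k : Fin 2, k = i ∨ k = j := by
    intro k; fin_cases i <;> fin_cases k <;> simp [hj]
  set bj : Bool := decide (0 ≤ x j) with hbj
  set q : ℕ → (Fin 2 → ℤ) := fun s => x + (s : ℤ) • Ev j bj with hq
  have hq0 : q 0 = x := by funext k; simp [hq]
  have hqS : ∀ s : ℕ, q (s + 1) = q s + Ev j bj := by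
    intro s; funext k
    simp only [hq, Pi.add_apply, Pi.smul_apply, smul_eq_mul]
    push_cast; ring
  have hqco : ∀ (s : ℕ) (k : Fin 2), q s k = x k + (s : ℤ) * (if k = j then ι bj else 0) := by
    intro s k; simp [hq, Ev, Pi.smul_apply, smul_eq_mul]
  have hsign : (bj = true ∧ 0 ≤ x j) ∨ (bj = false ∧ x j < 0) := by
    by_cases h : 0 ≤ x j
    · left; exact ⟨by simp [hbj, h], h⟩
    · right; exact ⟨by simp [hbj, h], by omega⟩
  have hqj : ∀ s : ℕ, (s : ℤ).natAbs ≤ (q s j).natAbs ∧ (x j).natAbs ≤ (q s j).natAbs := by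
    intro s
    have hco := hqco s j
    rw [if_pos rfl] at hco
    rcases hsign with ⟨hb, hs⟩ | ⟨hb, hs⟩
    · rw [hb, show ι true = 1 from rfl] at hco
      rw [hco]; constructor <;> omega
    · rw [hb, show ι false = -1 from rfl] at hco
      rw [hco]; constructor <;> omega
  have hnq : ∀ s : ℕ, max m s ≤ nInf (q s) := by
    intro s
    have h1 : m ≤ nInf (q s) := by
      rw [hm]
      apply nInf_le_iff.mpr
      intro k
      rcases hcov k with rfl | rfl
      · have hqsk : q s k = x k := by rw [hqco s k, if_neg hij, mul_zero, add_zero]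
        calc (x k).natAbs = (q s k).natAbs := by rw [hqsk]
          _ ≤ nInf (q s) := natAbs_le_nInf _ _
      · exact le_trans (hqj s).2 (natAbs_le_nInf _ _)
    have h2 : s ≤ nInf (q s) := by
      have := (hqj s).1
      simp only [Int.natAbs_natCast] at this
      exact le_trans this (natAbs_le_nInf _ _)
    omega
  set a : ℕ → ℝ := fun s => w (q s) (q s + Ev i b) with ha
  have hstep : ∀ s : ℕ, |a s - a (s + 1)| ≤ Absf 2 w (q s) := by
    intro s
    have := step_le_Absf w hij b bj (q s)
    rw [← hqS s] at this
    exact this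
  have hAb : ∀ s : ℕ, Absf 2 w (q s) ≤ (max C 0) * ((max m s : ℕ) : ℝ) ^ (-p) := by
    intro s
    have hn := hnq s
    have h0 : M ≤ nInf (q s) := le_trans hMm (le_trans (le_max_left _ _) hn)
    have h1 := hA (q s) h0
    have hmaxpos : (0 : ℝ) < ((max m s : ℕ) : ℝ) := by
      have : 1 ≤ max m s := le_trans hm1 (le_max_left _ _)
      exact_mod_cast this
    have h2 : ((nInf (q s) : ℕ) : ℝ) ^ (-p) ≤ ((max m s : ℕ) : ℝ) ^ (-p) := by
      apply rpow_anti hmaxpos (by exact_mod_cast hn) (by linarith)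
    calc Absf 2 w (q s) ≤ C * ((nInf (q s) : ℕ) : ℝ) ^ (-p) := h1
      _ ≤ (max C 0) * ((nInf (q s) : ℕ) : ℝ) ^ (-p) := by
          apply mul_le_mul_of_nonneg_right (le_max_left _ _) (by positivity)
      _ ≤ (max C 0) * ((max m s : ℕ) : ℝ) ^ (-p) :=
          mul_le_mul_of_nonneg_left h2 (le_max_right _ _)
  have htele : ∀ T : ℕ, |a 0 - a T| ≤ (3 * max C 0) * (m : ℝ) ^ (1 - p) := by
    intro T
    calc |a 0 - a T| ≤ ∑ s ∈ Finset.range T, Absf 2 w (q s) := tele_abs a _ hstep T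
      _ ≤ ∑ s ∈ Finset.range T, (max C 0) * ((max m s : ℕ) : ℝ) ^ (-p) :=
          Finset.sum_le_sum fun s _ => hAb s
      _ = (max C 0) * ∑ s ∈ Finset.range T, ((max m s : ℕ) : ℝ) ^ (-p) := by
          rw [Finset.mul_sum]
      _ ≤ (max C 0) * (3 * (m : ℝ) ^ (1 - p)) := by
          apply mul_le_mul_of_nonneg_left (sum_bound hp m hm1 T) (le_max_right _ _)
      _ = (3 * max C 0) * (m : ℝ) ^ (1 - p) := by ring
  have hfin : ∀ ε : ℝ, 0 < ε → |a 0 - 1| ≤ (3 * max C 0) * (m : ℝ) ^ (1 - p) + ε := by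
    intro ε hε
    obtain ⟨Mε, hMε⟩ := hw1 ε hε
    have hT : Mε ≤ nInf (q Mε) := le_trans (le_max_right _ _) (hnq Mε)
    have hadj := adj_add_Ev (q Mε) i b
    have h1 : |a Mε - 1| ≤ ε := hMε _ _ hadj hT
    calc |a 0 - 1| ≤ |a 0 - a Mε| + |a Mε - 1| := by
          have := abs_sub_le (a 0) (a Mε) 1; linarith
      _ ≤ (3 * max C 0) * (m : ℝ) ^ (1 - p) + ε := add_le_add (htele Mε) h1
  have hfinal := le_of_forall_pos_le_add (fun ε hε => hfin ε hε)
  have hae : a 0 = w x (x + Ev i b) := by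
    show w (q 0) (q 0 + Ev i b) = _
    rw [hq0]
  rw [hae] at hfinal
  exact hfinal

lemma crossing_facts {r : ℕ} {x : Fin 2 → ℤ} {i : Fin 2} {b : Bool}
    (hx : x ∈ Qr 2 r) (ho : x + Ev i b ∉ Qr 2 r) :
    nInf x = r ∧ (x + Ev i b) ∈ Qr 2 (r + 1) ∧ nInf (x + Ev i b) = r + 1 ∧
    nInf (x + Ev i b + Ev i b) = r + 2 ∧ x i = (if b then (r : ℤ) else -(r : ℤ)) := by
  rw [mem_Qr_iff] at hx
  have hco : ∀ k : Fin 2, (x + Ev i b) k = x k + (if k = i then ι b else 0) := fun k => rfl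
  have hco2 : ∀ k : Fin 2, (x + Ev i b + Ev i b) k
      = x k + (if k = i then ι b else 0) + (if k = i then ι b else 0) := fun k => rfl
  have hkex : ∃ k, ¬ ((x + Ev i b) k).natAbs ≤ r := by
    by_contra hc
    push_neg at hc
    exact ho (mem_Qr_iff.mpr (fun k => by have := hc k; omega))
  obtain ⟨k, hk⟩ := hkex
  have hki : k = i := by
    by_contra hne
    rw [hco k, if_neg hne, add_zero] at hk
    exact hk (hx k)
  subst hki
  rw [hco k, if_pos rfl] at hk
  have hxk := hx k
  cases b
  · simp only [ι, Bool.false_eq_true, if_false] at hk ⊢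
    have hxi : x k = -(r : ℤ) := by omega
    refine ⟨nInf_eq_of k hx (by omega), mem_Qr_iff.mpr fun k' => ?_,
      nInf_eq_of k (fun k' => ?_) ?_, nInf_eq_of k (fun k' => ?_) ?_, hxi⟩
    · rw [hco k']
      by_cases h' : k' = k
      · subst h'; simp only [if_pos rfl, ι, Bool.false_eq_true, if_false]; omega
      · rw [if_neg h', add_zero]; have := hx k'; omega
    · rw [hco k']
      by_cases h' : k' = k
      · subst h'; simp only [if_pos rfl, ι, Bool.false_eq_true, if_false]; omega
      · rw [if_neg h', add_zero]; have := hx k'; omega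
    · rw [hco k, if_pos rfl]
      simp only [ι, Bool.false_eq_true, if_false]; omega
    · rw [hco2 k']
      by_cases h' : k' = k
      · subst h'; simp only [if_pos rfl, ι, Bool.false_eq_true, if_false]; omega
      · rw [if_neg h', add_zero, add_zero]; have := hx k'; omega
    · rw [hco2 k, if_pos rfl]
      simp only [ι, Bool.false_eq_true, if_false]; omega
  · simp only [ι, if_true] at hk ⊢
    have hxi : x k = (r : ℤ) := by omega
    refine ⟨nInf_eq_of k hx (by omega), mem_Qr_iff.mpr fun k' => ?_,
      nInf_eq_of k (fun k' => ?_) ?_, nInf_eq_of k (fun k' => ?_) ?_, hxi⟩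
    · rw [hco k']
      by_cases h' : k' = k
      · subst h'; simp only [if_pos rfl, ι, if_true]; omega
      · rw [if_neg h', add_zero]; have := hx k'; omega
    · rw [hco k']
      by_cases h' : k' = k
      · subst h'; simp only [if_pos rfl, ι, if_true]; omega
      · rw [if_neg h', add_zero]; have := hx k'; omega
    · rw [hco k, if_pos rfl]
      simp only [ι, if_true]; omega
    · rw [hco2 k']
      by_cases h' : k' = k
      · subst h'; simp only [if_pos rfl, ι, if_true]; omega
      · rw [if_neg h', add_zero, add_zero]; have := hx k'; omega
    · rw [hco2 k, if_pos rfl]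
      simp only [ι, if_true]; omega

lemma card_slice (r : ℕ) (i : Fin 2) (c : ℤ) :
    ((Qr 2 r).filter (fun x => x i = c)).card ≤ 2 * r + 1 := by
  classical
  set j : Fin 2 := if i = 0 then 1 else 0 with hj
  have hcov : ∀ k : Fin 2, k = i ∨ k = j := by
    intro k; fin_cases i <;> fin_cases k <;> simp [hj]
  have hmaps : ∀ x ∈ (Qr 2 r).filter (fun x => x i = c),
      x j ∈ Finset.Icc (-(r : ℤ)) (r : ℤ) := by
    intro x hx
    rw [Finset.mem_filter] at hx
    have := mem_Qr_iff.mp hx.1 j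
    rw [Finset.mem_Icc]; omega
  have hinj : Set.InjOn (fun x : Fin 2 → ℤ => x j)
      ((Qr 2 r).filter (fun x => x i = c)) := by
    intro x hx y hy hxy
    rw [Finset.mem_coe, Finset.mem_filter] at hx hy
    funext k
    rcases hcov k with rfl | rfl
    · rw [hx.2, hy.2]
    · exact hxy
  have hIcc : (Finset.Icc (-(r : ℤ)) (r : ℤ)).card = 2 * r + 1 := by
    rw [Int.card_Icc]; omega
  have h := Finset.card_le_card_of_injOn (fun x : Fin 2 → ℤ => x j) hmaps hinj
  exact le_trans h (le_of_eq hIcc)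

end Aux

/-- there is no asymptotically flat graph of dimension `2` with positive
ADM mass `E(G) = (1/(2²·2))·L > 0`. -/
theorem no_positive_mass_dim_two :
    ¬ ∃ (V : Type) (W : WGraph V) (Wg : GridWeight 2) (L : ℝ),
        AsympFlatPair 2 W Wg ∧
        Tendsto (fun r : ℕ => ErSum 2 Wg.w r - TErSum 2 Wg.w r) atTop (𝓝 L) ∧
        0 < (1 / (2 ^ 2 * 2) : ℝ) * L := by
  rintro ⟨V, W, Wg, L, ⟨hAFG, -⟩, hT, hpos⟩
  obtain ⟨p, hpn, hw1, ⟨C, M, hM0, hA⟩, -⟩ := hAFG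
  have hp : (2 : ℝ) < p := by exact_mod_cast hpn
  have hL : 0 < L := by nlinarith
  set C₀ : ℝ := 3 * max C 0 with hC₀def
  have hC₀ : 0 ≤ C₀ := by positivity
  have hwc := weight_close Wg.w hp hw1 C M hA
  -- the key estimate
  have key : ∀ r : ℕ, max M 1 ≤ r →
      ErSum 2 Wg.w r - TErSum 2 Wg.w r ≤ (4 * (2 * (r : ℝ) + 1)) * (2 * C₀ * (r : ℝ) ^ (1 - p)) := by
    intro r hr
    have hr1 : 1 ≤ r := le_trans (le_max_right _ _) hr
    have hr0 : (0 : ℝ) < (r : ℝ) := by exact_mod_cast hr1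
    set β : ℝ := 2 * C₀ * (r : ℝ) ^ (1 - p) with hβ
    have hβ0 : 0 ≤ β := by positivity
    set et : (Fin 2 → ℤ) × (Fin 2 × Bool) → ℝ := fun z =>
      if z.1 + Ev z.2.1 z.2.2 ∉ Qr 2 r then Wg.w z.1 (z.1 + Ev z.2.1 z.2.2) else 0 with het
    set pt : (Fin 2 → ℤ) × (Fin 2 × Bool) → ℝ := fun z =>
      if z.1 + Ev z.2.1 z.2.2 ∉ Qr 2 r then
        Wg.w (z.1 + Ev z.2.1 z.2.2) (z.1 + Ev z.2.1 z.2.2 + Ev z.2.1 z.2.2) else 0 with hptd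
    set tt : (Fin 2 → ℤ) × (Fin 2 × Bool) → ℝ := fun z =>
      if nInf z.1 = r + 1 then
        (if nInf (z.1 + Ev z.2.1 z.2.2) = r + 2 then Wg.w z.1 (z.1 + Ev z.2.1 z.2.2) else 0)
      else 0 with htt
    set rt : (Fin 2 → ℤ) × (Fin 2 × Bool) → ℝ := fun z =>
      if z.1 z.2.1 = (if z.2.2 then (r : ℤ) else -(r : ℤ)) then β else 0 with hrt
    -- ErSum as a sum over the product index set
    have hE : ErSum 2 Wg.w r
        = ∑ z ∈ Qr 2 r ×ˢ (Finset.univ : Finset (Fin 2 × Bool)), et z := by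
      rw [ErSum, Finset.sum_product]
      refine Finset.sum_congr rfl fun x hx => ?_
      rw [Fintype.sum_prod_type]
      refine Finset.sum_congr rfl fun i _ => ?_
      rw [Fintype.sum_bool]
      simp only [het]
      rw [add_Ev_true, add_Ev_false]
    -- TErSum as a sum over the product index set
    have hTE : TErSum 2 Wg.w r
        = ∑ z ∈ Qr 2 (r + 1) ×ˢ (Finset.univ : Finset (Fin 2 × Bool)), tt z := by
      rw [TErSum, Finset.sum_product]
      refine Finset.sum_congr rfl fun x hx => ?_
      by_cases h : nInf x = r + 1
      · rw [if_pos h, Fintype.sum_prod_type]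
        refine Finset.sum_congr rfl fun i _ => ?_
        rw [Fintype.sum_bool]
        simp only [htt, if_pos h]
        rw [add_Ev_true, add_Ev_false]
      · rw [if_neg h]
        simp [htt, h]
    have htt0 : ∀ z, 0 ≤ tt z := by
      intro z
      simp only [htt]
      split
      · split
        · exact (Wg.pos _ _ (adj_add_Ev _ _ _)).le
        · exact le_refl 0
      · exact le_refl 0
    -- the paired sum is at most TErSum
    have hP : (∑ z ∈ Qr 2 r ×ˢ (Finset.univ : Finset (Fin 2 × Bool)), pt z)
        ≤ TErSum 2 Wg.w r := by
      rw [hTE]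
      set fl := (Qr 2 r ×ˢ (Finset.univ : Finset (Fin 2 × Bool))).filter
          (fun z => z.1 + Ev z.2.1 z.2.2 ∉ Qr 2 r) with hfl
      have h1 : (∑ z ∈ Qr 2 r ×ˢ (Finset.univ : Finset (Fin 2 × Bool)), pt z)
          = ∑ z ∈ fl, Wg.w (z.1 + Ev z.2.1 z.2.2) (z.1 + Ev z.2.1 z.2.2 + Ev z.2.1 z.2.2) := by
        rw [hfl, Finset.sum_filter]
      rw [h1]
      have hinj : ∀ z1 ∈ fl, ∀ z2 ∈ fl,
          (fun z : (Fin 2 → ℤ) × (Fin 2 × Bool) => (z.1 + Ev z.2.1 z.2.2, z.2)) z1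
            = (fun z : (Fin 2 → ℤ) × (Fin 2 × Bool) => (z.1 + Ev z.2.1 z.2.2, z.2)) z2
          → z1 = z2 := by
        intro z1 _ z2 _ h
        simp only [Prod.mk.injEq] at h
        obtain ⟨h1', h2⟩ := h
        rw [h2] at h1'
        exact Prod.ext (add_right_cancel h1') h2
      have himg : (∑ z ∈ fl, Wg.w (z.1 + Ev z.2.1 z.2.2) (z.1 + Ev z.2.1 z.2.2 + Ev z.2.1 z.2.2))
          = ∑ z' ∈ fl.image (fun z : (Fin 2 → ℤ) × (Fin 2 × Bool) => (z.1 + Ev z.2.1 z.2.2, z.2)),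
              Wg.w z'.1 (z'.1 + Ev z'.2.1 z'.2.2) :=
        (Finset.sum_image (f := fun z' : (Fin 2 → ℤ) × (Fin 2 × Bool) =>
          Wg.w z'.1 (z'.1 + Ev z'.2.1 z'.2.2)) hinj).symm
      rw [himg]
      have hfacts : ∀ z' ∈ fl.image
            (fun z : (Fin 2 → ℤ) × (Fin 2 × Bool) => (z.1 + Ev z.2.1 z.2.2, z.2)),
          z' ∈ Qr 2 (r + 1) ×ˢ (Finset.univ : Finset (Fin 2 × Bool)) ∧
            Wg.w z'.1 (z'.1 + Ev z'.2.1 z'.2.2) = tt z' := by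
        intro z' hz'
        rw [Finset.mem_image] at hz'
        obtain ⟨z, hz, rfl⟩ := hz'
        rw [hfl, Finset.mem_filter, Finset.mem_product] at hz
        obtain ⟨⟨hzQ, -⟩, hzc⟩ := hz
        obtain ⟨-, f2, f3, f4, -⟩ := crossing_facts hzQ hzc
        refine ⟨Finset.mem_product.mpr ⟨f2, Finset.mem_univ _⟩, ?_⟩
        simp only [htt]
        rw [if_pos f3, if_pos f4]
      calc (∑ z' ∈ fl.image
              (fun z : (Fin 2 → ℤ) × (Fin 2 × Bool) => (z.1 + Ev z.2.1 z.2.2, z.2)),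
            Wg.w z'.1 (z'.1 + Ev z'.2.1 z'.2.2))
          = ∑ z' ∈ fl.image
              (fun z : (Fin 2 → ℤ) × (Fin 2 × Bool) => (z.1 + Ev z.2.1 z.2.2, z.2)),
            tt z' := Finset.sum_congr rfl fun z' hz' => (hfacts z' hz').2
        _ ≤ ∑ z' ∈ Qr 2 (r + 1) ×ˢ (Finset.univ : Finset (Fin 2 × Bool)), tt z' :=
            Finset.sum_le_sum_of_subset_of_nonneg
              (fun z' hz' => (hfacts z' hz').1)
              (fun z' _ _ => htt0 z')
    -- termwise comparison
    have hEP : (∑ z ∈ Qr 2 r ×ˢ (Finset.univ : Finset (Fin 2 × Bool)), et z)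
        - (∑ z ∈ Qr 2 r ×ˢ (Finset.univ : Finset (Fin 2 × Bool)), pt z)
        ≤ ∑ z ∈ Qr 2 r ×ˢ (Finset.univ : Finset (Fin 2 × Bool)), rt z := by
      rw [← Finset.sum_sub_distrib]
      apply Finset.sum_le_sum
      intro z hz
      have hxS : z.1 ∈ Qr 2 r := (Finset.mem_product.mp hz).1
      have hrt0 : 0 ≤ rt z := by
        simp only [hrt]
        split_ifs <;> simp [hβ0]
      by_cases hc : z.1 + Ev z.2.1 z.2.2 ∉ Qr 2 r
      · obtain ⟨f1, f2, f3, f4, f5⟩ := crossing_facts hxS hc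
        have hnx : max M 1 ≤ nInf z.1 := by rw [f1]; exact hr
        have hb1 := hwc z.1 z.2.1 z.2.2 hnx
        have hny : max M 1 ≤ nInf (z.1 + Ev z.2.1 z.2.2) := by rw [f3]; omega
        have hb2 := hwc (z.1 + Ev z.2.1 z.2.2) z.2.1 z.2.2 hny
        rw [f1] at hb1
        rw [f3] at hb2
        have hb2' : |Wg.w (z.1 + Ev z.2.1 z.2.2) (z.1 + Ev z.2.1 z.2.2 + Ev z.2.1 z.2.2) - 1|
            ≤ C₀ * (r : ℝ) ^ (1 - p) := by
          refine le_trans hb2 ?_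
          rw [← hC₀def]
          apply mul_le_mul_of_nonneg_left _ hC₀
          apply rpow_anti hr0 _ (by linarith)
          push_cast; linarith
        have hb1' : |Wg.w z.1 (z.1 + Ev z.2.1 z.2.2) - 1| ≤ C₀ * (r : ℝ) ^ (1 - p) := by
          rw [← hC₀def] at hb1; exact hb1
        simp only [het, hptd, hrt, if_pos hc, f5, eq_self_iff_true, if_true]
        have h1 := abs_le.mp hb1'
        have h2 := abs_le.mp hb2'
        rw [hβ]
        linarith [h1.1, h1.2, h2.1, h2.2]
      · simp only [het, hptd, if_neg hc, sub_zero]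
        simpa using hrt0
    -- the slice count bound
    have hR : (∑ z ∈ Qr 2 r ×ˢ (Finset.univ : Finset (Fin 2 × Bool)), rt z)
        ≤ (4 * (2 * (r : ℝ) + 1)) * β := by
      rw [Finset.sum_product_right]
      have hone : ∀ y : Fin 2 × Bool,
          (∑ x ∈ Qr 2 r, rt (x, y)) ≤ (2 * (r : ℝ) + 1) * β := by
        intro y
        have h1 : (∑ x ∈ Qr 2 r, rt (x, y))
            = ∑ x ∈ (Qr 2 r).filter (fun x => x y.1 = (if y.2 then (r : ℤ) else -(r : ℤ))), β := by
          rw [Finset.sum_filter]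
        rw [h1, Finset.sum_const]
        have hcard := card_slice r y.1 (if y.2 then (r : ℤ) else -(r : ℤ))
        calc (((Qr 2 r).filter (fun x => x y.1 = (if y.2 then (r : ℤ) else -(r : ℤ)))).card) • β
            = (((Qr 2 r).filter (fun x => x y.1 = (if y.2 then (r : ℤ) else -(r : ℤ)))).card : ℝ) * β :=
              nsmul_eq_mul _ _
          _ ≤ (2 * (r : ℝ) + 1) * β := by
              apply mul_le_mul_of_nonneg_right _ hβ0
              exact_mod_cast hcard
      calc (∑ y : Fin 2 × Bool, ∑ x ∈ Qr 2 r, rt (x, y))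
          ≤ ∑ _y : Fin 2 × Bool, (2 * (r : ℝ) + 1) * β :=
            Finset.sum_le_sum fun y _ => hone y
        _ = 4 * ((2 * (r : ℝ) + 1) * β) := by
            rw [Finset.sum_const, Finset.card_univ]
            simp only [Fintype.card_prod, Fintype.card_fin, Fintype.card_bool, nsmul_eq_mul]
            norm_num
        _ = (4 * (2 * (r : ℝ) + 1)) * β := by ring
    rw [hE]
    linarith [hP, hEP, hR]
  -- pass to the limit
  have hbnd : ∀ᶠ r : ℕ in atTop,
      ErSum 2 Wg.w r - TErSum 2 Wg.w r ≤ (4 * (2 * (r : ℝ) + 1)) * (2 * C₀ * (r : ℝ) ^ (1 - p)) :=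
    Filter.eventually_atTop.mpr ⟨max M 1, key⟩
  have h2p : Tendsto (fun r : ℕ => (r : ℝ) ^ (2 - p)) atTop (𝓝 0) := by
    have := (tendsto_rpow_neg_atTop (by linarith : (0 : ℝ) < p - 2)).comp
      tendsto_natCast_atTop_atTop (α := ℕ)
    have heq : (fun r : ℕ => (r : ℝ) ^ (-(p - 2))) = fun r : ℕ => (r : ℝ) ^ (2 - p) := by
      funext r; congr 1; ring
    rw [← heq]
    exact this
  have h1p : Tendsto (fun r : ℕ => (r : ℝ) ^ (1 - p)) atTop (𝓝 0) := by
    have := (tendsto_rpow_neg_atTop (by linarith : (0 : ℝ) < p - 1)).comp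
      tendsto_natCast_atTop_atTop (α := ℕ)
    have heq : (fun r : ℕ => (r : ℝ) ^ (-(p - 1))) = fun r : ℕ => (r : ℝ) ^ (1 - p) := by
      funext r; congr 1; ring
    rw [← heq]
    exact this
  have hf0 : Tendsto (fun r : ℕ => (4 * (2 * (r : ℝ) + 1)) * (2 * C₀ * (r : ℝ) ^ (1 - p)))
      atTop (𝓝 0) := by
    have hg : Tendsto (fun r : ℕ => 16 * C₀ * (r : ℝ) ^ (2 - p) + 8 * C₀ * (r : ℝ) ^ (1 - p))
        atTop (𝓝 0) := by
      have := (h2p.const_mul (16 * C₀)).add (h1p.const_mul (8 * C₀))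
      simpa using this
    have heq : ∀ᶠ r : ℕ in atTop,
        16 * C₀ * (r : ℝ) ^ (2 - p) + 8 * C₀ * (r : ℝ) ^ (1 - p)
          = (4 * (2 * (r : ℝ) + 1)) * (2 * C₀ * (r : ℝ) ^ (1 - p)) := by
      filter_upwards [Filter.eventually_ge_atTop 1] with r hr
      have hr0 : (0 : ℝ) < (r : ℝ) := by exact_mod_cast hr
      have hrr : (r : ℝ) * (r : ℝ) ^ (1 - p) = (r : ℝ) ^ (2 - p) := by
        rw [show (2 : ℝ) - p = 1 + (1 - p) by ring, Real.rpow_add hr0, Real.rpow_one]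
      rw [← hrr]; ring
    exact hg.congr' heq
  have hL0 : L ≤ 0 := le_of_tendsto_of_tendsto hT hf0 hbnd
  linarith

end PMT
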